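/- Concavity of choice share in a parameter: under the assumptions of the monotonicity lemma, if additionally q_{ij}(·) is concave and p_{ik}(·) (all k) and q_{il}(·) (all l ≠ j) are convex (all twice differentiable), then u ↦ π_j^w(u) is concave on T and, for l ≠ j, u ↦ π_l^w(u) is convex on T. -/

import Mathlib

open Matrix Filter Finset Topology

attribute [local instance] Matrix.linftyOpNormedRing Matrix.linftyOpNormedAlgebra

section cplx
variable {n : ℕ}

lemma entry_norm_le (A : Matrix (Fin n) (Fin n) ℂ) (i i' : Fin n) : ‖A i i'‖ ≤ ‖A‖ := by
  have h1 : ‖A i i'‖₊ ≤ ∑ j, ‖A i j‖₊ :=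
    Finset.single_le_sum (f := fun j => ‖A i j‖₊) (fun j _ => zero_le) (Finset.mem_univ i')
  have h2 : (∑ j, ‖A i j‖₊) ≤ ‖A‖₊ := by
    rw [Matrix.linfty_opNNNorm_def]
    exact Finset.le_sup (f := fun i => ∑ j, ‖A i j‖₊) (Finset.mem_univ i)
  exact_mod_cast h1.trans h2

lemma neumann_complex (Q : Matrix (Fin n) (Fin n) ℂ)
    (hs : ∀ μ ∈ spectrum ℂ Q, ‖μ‖ < 1) :
    IsUnit (1 - Q) ∧ ∀ i i', Tendsto (fun N => (∑ k ∈ Finset.range N, Q ^ k) i i')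
      atTop (𝓝 ((1 - Q)⁻¹ i i')) := by
  have h1unit : IsUnit (1 - Q) := by
    have h1 : (1 : ℂ) ∉ spectrum ℂ Q := fun h => absurd (hs 1 h) (by norm_num)
    have := spectrum.notMem_iff.mp h1
    simpa using this
  have hdet : IsUnit (1 - Q).det := (Matrix.isUnit_iff_isUnit_det _).mp h1unit
  refine ⟨h1unit, fun i i' => ?_⟩
  haveI : Nontrivial (Matrix (Fin n) (Fin n) ℂ) := by
    refine ⟨1, 0, fun h => ?_⟩
    have := congrFun (congrFun h i) i
    simp [Matrix.one_apply] at this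
  haveI : CompleteSpace (Matrix (Fin n) (Fin n) ℂ) := FiniteDimensional.complete ℂ _
  -- spectral radius < 1
  have hρ : spectralRadius ℂ Q < 1 := by
    have hne : (spectrum ℂ Q).Nonempty := spectrum.nonempty Q
    have := spectrum.spectralRadius_lt_of_forall_lt_of_nonempty hne
      (r := 1) (fun k hk => by
        have := hs k hk
        rw [← NNReal.coe_lt_coe]
        simpa using this)
    simpa using this
  -- Gelfand: get m ≥ 1 with ‖Q^m‖ < 1
  obtain ⟨m, hm1, hmlt⟩ : ∃ m : ℕ, 1 ≤ m ∧ (‖Q ^ m‖₊ : ENNReal) ^ (1 / (m:ℝ)) < 1 := by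
    have hG := spectrum.pow_nnnorm_pow_one_div_tendsto_nhds_spectralRadius Q
    have hev := hG.eventually_lt_const hρ
    obtain ⟨m, hm1, hmlt⟩ := ((eventually_ge_atTop 1).and hev).exists
    exact ⟨m, hm1, hmlt⟩
  have hQm : ‖Q ^ m‖ < 1 := by
    by_contra hc
    push_neg at hc
    have h1le : (1 : ENNReal) ≤ (‖Q ^ m‖₊ : ENNReal) := by
      rw [ENNReal.one_le_coe_iff]
      exact_mod_cast hc
    have : (1 : ENNReal) ≤ (‖Q ^ m‖₊ : ENNReal) ^ (1 / (m:ℝ)) := by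
      calc (1 : ENNReal) = 1 ^ (1/(m:ℝ)) := by rw [ENNReal.one_rpow]
      _ ≤ _ := ENNReal.rpow_le_rpow h1le (by positivity)
    exact absurd (this.trans_lt hmlt) (lt_irrefl _)
  set R := (1 - Q)⁻¹ with hR
  -- partial sums formula
  have hSN : ∀ N, (∑ k ∈ Finset.range N, Q ^ k) = R - Q ^ N * R := by
    intro N
    have h := geom_sum_mul Q N
    have h2 : (∑ k ∈ Finset.range N, Q ^ k) * (1 - Q) = 1 - Q ^ N := by
      have := congrArg Neg.neg h
      rw [← mul_neg, neg_sub, neg_sub] at this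
      exact this
    have h3 : (∑ k ∈ Finset.range N, Q ^ k) * ((1 - Q) * R) = (1 - Q ^ N) * R := by
      rw [← mul_assoc, h2]
    rw [Matrix.mul_nonsing_inv _ hdet, mul_one] at h3
    rw [h3, sub_mul, one_mul]
  -- norm bound pieces
  have hm0 : 0 < m := hm1
  set r := ‖Q ^ m‖ with hr
  have hr0 : 0 ≤ r := norm_nonneg _
  have hC : ∃ C : ℝ, 0 ≤ C ∧ ∀ s < m, ‖Q ^ s‖ ≤ C := by
    refine ⟨(Finset.range m).sup' ⟨0, Finset.mem_range.mpr hm0⟩ (fun s => ‖Q ^ s‖), ?_, ?_⟩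
    · exact le_trans (norm_nonneg (Q ^ 0)) (Finset.le_sup' (f := fun s => ‖Q ^ s‖) (Finset.mem_range.mpr hm0))
    · exact fun s hs => Finset.le_sup' (f := fun s => ‖Q ^ s‖) (Finset.mem_range.mpr hs)
  obtain ⟨C, hC0, hCb⟩ := hC
  have hdivtop : Tendsto (fun N : ℕ => N / m) atTop atTop := by
    refine tendsto_atTop_atTop.2 fun b => ⟨b * m, fun a ha => ?_⟩
    exact (Nat.le_div_iff_mul_le hm0).2 ha
  have hpow0 : Tendsto (fun N : ℕ => r ^ (N / m) * (C * ‖R‖)) atTop (𝓝 0) := by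
    have := (tendsto_pow_atTop_nhds_zero_of_lt_one hr0 hQm).comp hdivtop
    simpa using this.mul_const (C * ‖R‖)
  -- entry convergence via squeeze
  have hnorm : ∀ᶠ N in atTop, ‖(∑ k ∈ Finset.range N, Q ^ k) i i' - R i i'‖
      ≤ r ^ (N / m) * (C * ‖R‖) := by
    filter_upwards [eventually_ge_atTop m] with N hN
    have hentry : ‖(∑ k ∈ Finset.range N, Q ^ k) i i' - R i i'‖
        ≤ ‖(∑ k ∈ Finset.range N, Q ^ k) - R‖ := by
      have := entry_norm_le ((∑ k ∈ Finset.range N, Q ^ k) - R) i i'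
      simpa [Matrix.sub_apply] using this
    refine hentry.trans ?_
    rw [hSN N, sub_sub_cancel_left, norm_neg]
    calc ‖Q ^ N * R‖ ≤ ‖Q ^ N‖ * ‖R‖ := norm_mul_le _ _
      _ ≤ (r ^ (N / m) * C) * ‖R‖ := by
          refine mul_le_mul_of_nonneg_right ?_ (norm_nonneg _)
          have hNsplit : Q ^ N = (Q ^ m) ^ (N / m) * Q ^ (N % m) := by
            rw [← pow_mul, ← pow_add, Nat.div_add_mod]
          rw [hNsplit]
          calc ‖(Q ^ m) ^ (N / m) * Q ^ (N % m)‖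
              ≤ ‖(Q ^ m) ^ (N / m)‖ * ‖Q ^ (N % m)‖ := norm_mul_le _ _
            _ ≤ r ^ (N / m) * C := by
                refine mul_le_mul ?_ (hCb _ (Nat.mod_lt _ hm0)) (norm_nonneg _) (by positivity)
                exact norm_pow_le' _ (Nat.div_pos hN hm0)
      _ = r ^ (N / m) * (C * ‖R‖) := by ring
  have := squeeze_zero_norm' hnorm hpow0
  rwa [← tendsto_sub_nhds_zero_iff]

end cplx

section realm
variable {n : ℕ}

lemma neumann_real (P : Matrix (Fin n) (Fin n) ℝ)
    (hs : ∀ μ ∈ spectrum ℂ (P.map (algebraMap ℝ ℂ)), ‖μ‖ < 1) :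
    IsUnit (1 - P).det ∧ ∀ w v : Fin n → ℝ,
      Tendsto (fun N => w ⬝ᵥ ((∑ k ∈ Finset.range N, P ^ k) *ᵥ v)) atTop
        (𝓝 (w ⬝ᵥ ((1 - P)⁻¹ *ᵥ v))) := by
  set f := algebraMap ℝ ℂ
  set Q := P.map f with hQdef
  have hQ : Q = f.mapMatrix P := rfl
  have h1Q : 1 - Q = f.mapMatrix (1 - P) := by rw [map_sub, _root_.map_one, hQ]
  obtain ⟨hunit, hconv⟩ := neumann_complex Q hs
  have hdetℝ : IsUnit (1 - P).det := by
    have h1 := (Matrix.isUnit_iff_isUnit_det _).mp hunit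
    rw [h1Q] at h1
    have h2 : (f.mapMatrix (1 - P)).det = f ((1 - P).det) := (RingHom.map_det f (1 - P)).symm
    rw [h2] at h1
    have h3 : (1 - P).det ≠ 0 := by
      intro h
      rw [h, map_zero] at h1
      exact not_isUnit_zero h1
    exact isUnit_iff_ne_zero.mpr h3
  refine ⟨hdetℝ, fun w v => ?_⟩
  -- inverse commutes with map
  have hinv : (1 - Q)⁻¹ = f.mapMatrix ((1 - P)⁻¹) := by
    refine Matrix.inv_eq_left_inv ?_
    rw [h1Q, ← _root_.map_mul, Matrix.nonsing_inv_mul _ hdetℝ, _root_.map_one]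
  -- entry convergence over ℝ
  have hent : ∀ i i', Tendsto (fun N => (∑ k ∈ Finset.range N, P ^ k) i i') atTop
      (𝓝 ((1 - P)⁻¹ i i')) := by
    intro i i'
    have hmap : ∀ N, (∑ k ∈ Finset.range N, Q ^ k) = f.mapMatrix (∑ k ∈ Finset.range N, P ^ k) := by
      intro N
      rw [map_sum]
      exact Finset.sum_congr rfl fun k _ => by rw [map_pow, hQ]
    have h1 := hconv i i'
    rw [hinv] at h1
    simp only [hmap] at h1
    have h2 := (Complex.continuous_re.tendsto _).comp h1
    have h3 : ∀ A : Matrix (Fin n) (Fin n) ℝ, ((f.mapMatrix A : Matrix (Fin n) (Fin n) ℂ) i i').re = A i i' := by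
      intro A
      simp [RingHom.mapMatrix_apply, Matrix.map_apply, f]
    simpa only [Function.comp_def, h3] using h2
  -- assemble scalar convergence
  have hexp : ∀ M : Matrix (Fin n) (Fin n) ℝ, w ⬝ᵥ (M *ᵥ v) = ∑ i, ∑ i', w i * M i i' * v i' := by
    intro M
    simp [dotProduct, Matrix.mulVec, Finset.mul_sum, mul_assoc]
  simp only [hexp]
  exact tendsto_finset_sum _ fun i _ => tendsto_finset_sum _ fun i' _ =>
    (((hent i i').const_mul (w i)).mul_const (v i'))

end realm

section cvx
variable {T : Set ℝ}

/-- nonneg + antitone + convex on `T`. -/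
def NAC (T : Set ℝ) (f : ℝ → ℝ) : Prop :=
  (∀ x ∈ T, 0 ≤ f x) ∧ AntitoneOn f T ∧ ConvexOn ℝ T f

lemma NAC_const (hT : Convex ℝ T) {c : ℝ} (hc : 0 ≤ c) : NAC T fun _ => c :=
  ⟨fun _ _ => hc, antitoneOn_const, convexOn_const c hT⟩

lemma NAC.mul {f g : ℝ → ℝ} (hf : NAC T f) (hg : NAC T g) : NAC T fun u => f u * g u := by
  obtain ⟨hf0, hfa, hfc⟩ := hf
  obtain ⟨hg0, hga, hgc⟩ := hg
  refine ⟨fun x hx => mul_nonneg (hf0 x hx) (hg0 x hx), ?_, ?_⟩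
  · intro x hx y hy hxy
    exact mul_le_mul (hfa hx hy hxy) (hga hx hy hxy) (hg0 y hy) (hf0 x hx)
  · refine ⟨hfc.1, fun x hx y hy a b ha hb hab => ?_⟩
    have hz : a • x + b • y ∈ T := hfc.1 hx hy ha hb hab
    simp only [smul_eq_mul] at *
    have h1 : f (a * x + b * y) ≤ a * f x + b * f y := by
      have := hfc.2 hx hy ha hb hab; simpa [smul_eq_mul] using this
    have h2 : g (a * x + b * y) ≤ a * g x + b * g y := by
      have := hgc.2 hx hy ha hb hab; simpa [smul_eq_mul] using this
    have hfz : 0 ≤ f (a * x + b * y) := hf0 _ (by simpa [smul_eq_mul] using hz)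
    have hgz : 0 ≤ g (a * x + b * y) := hg0 _ (by simpa [smul_eq_mul] using hz)
    have hkey : 0 ≤ (f x - f y) * (g x - g y) := by
      rcases le_total x y with h | h
      · have h1 := hfa hx hy h; have h2 := hga hx hy h
        nlinarith
      · have h1 := hfa hy hx h; have h2 := hga hy hx h
        nlinarith
    have hA : 0 ≤ a * f x + b * f y := by
      have := hf0 x hx; have := hf0 y hy; positivity
    have hprod : f (a * x + b * y) * g (a * x + b * y)
        ≤ (a * f x + b * f y) * (a * g x + b * g y) :=
      mul_le_mul h1 h2 hgz hA
    have hid : a * (f x * g x) + b * (f y * g y) - (a * f x + b * f y) * (a * g x + b * g y)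
        = a * b * ((f x - f y) * (g x - g y)) := by
      have hb1 : b = 1 - a := by linarith
      rw [hb1]; ring
    nlinarith [mul_nonneg (mul_nonneg ha hb) hkey]

lemma NAC.add {f g : ℝ → ℝ} (hf : NAC T f) (hg : NAC T g) : NAC T fun u => f u + g u :=
  ⟨fun x hx => add_nonneg (hf.1 x hx) (hg.1 x hx), hf.2.1.add hg.2.1, hf.2.2.add hg.2.2⟩

lemma NAC_sum (hT : Convex ℝ T) {ι : Type*} (s : Finset ι) (f : ι → ℝ → ℝ)
    (hf : ∀ i ∈ s, NAC T (f i)) : NAC T fun u => ∑ i ∈ s, f i u := by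
  induction s using Finset.cons_induction with
  | empty => simpa using NAC_const hT le_rfl
  | cons a s ha ih =>
    simp only [Finset.sum_cons]
    exact (hf a (Finset.mem_cons_self a s)).add
      (ih fun i hi => hf i (Finset.mem_cons.mpr (Or.inr hi)))

lemma convexOn_sum' {ι : Type*} (hT : Convex ℝ T) (s : Finset ι) (f : ι → ℝ → ℝ)
    (hf : ∀ i ∈ s, ConvexOn ℝ T (f i)) : ConvexOn ℝ T fun u => ∑ i ∈ s, f i u := by
  induction s using Finset.cons_induction with
  | empty => simpa using convexOn_const 0 hT
  | cons a s ha ih =>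
    simp only [Finset.sum_cons]
    exact (hf a (Finset.mem_cons_self a s)).add
      (ih fun i hi => hf i (Finset.mem_cons.mpr (Or.inr hi)))

lemma convexOn_of_tendsto (hT : Convex ℝ T) {F : ℕ → ℝ → ℝ} {f : ℝ → ℝ}
    (hF : ∀ N, ConvexOn ℝ T (F N))
    (hlim : ∀ u ∈ T, Tendsto (fun N => F N u) atTop (𝓝 (f u))) : ConvexOn ℝ T f := by
  refine ⟨hT, fun x hx y hy a b ha hb hab => ?_⟩
  have hz : a • x + b • y ∈ T := hT hx hy ha hb hab
  refine le_of_tendsto_of_tendsto' (hlim _ hz)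
    (((hlim x hx).const_mul a).add ((hlim y hy).const_mul b)) fun N => ?_
  have := (hF N).2 hx hy ha hb hab
  simpa [smul_eq_mul] using this

lemma convexOn_congr {f g : ℝ → ℝ} (h : ∀ x ∈ T, f x = g x) (hg : ConvexOn ℝ T g) :
    ConvexOn ℝ T f := by
  refine ⟨hg.1, fun x hx y hy a b ha hb hab => ?_⟩
  have hz : a • x + b • y ∈ T := hg.1 hx hy ha hb hab
  rw [h _ hz, h _ hx, h _ hy]
  exact hg.2 hx hy ha hb hab

lemma concaveOn_congr {f g : ℝ → ℝ} (h : ∀ x ∈ T, f x = g x) (hg : ConcaveOn ℝ T g) :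
    ConcaveOn ℝ T f := by
  refine ⟨hg.1, fun x hx y hy a b ha hb hab => ?_⟩
  have hz : a • x + b • y ∈ T := hg.1 hx hy ha hb hab
  rw [h _ hz, h _ hx, h _ hy]
  exact hg.2 hx hy ha hb hab

lemma NAC_pow_entry {n : ℕ} (hT : Convex ℝ T) (P : ℝ → Matrix (Fin n) (Fin n) ℝ)
    (hp : ∀ i k, NAC T fun u => P u i k) :
    ∀ (k : ℕ) (i i' : Fin n), NAC T fun u => (P u ^ k) i i' := by
  intro k
  induction k with
  | zero =>
    intro i i'
    have : (fun u => (P u ^ 0) i i') = fun _ => (1 : Matrix (Fin n) (Fin n) ℝ) i i' := by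
      funext u; rw [pow_zero]
    rw [this]
    refine NAC_const hT ?_
    rw [Matrix.one_apply]
    split <;> norm_num
  | succ k ih =>
    intro i i'
    have : (fun u => (P u ^ (k + 1)) i i') =
        fun u => ∑ i'', (P u ^ k) i i'' * P u i'' i' := by
      funext u; rw [pow_succ, Matrix.mul_apply]
    rw [this]
    exact NAC_sum hT _ _ fun i'' _ => (ih i i'').mul (hp i'' i')

end cvx


/-- Concavity of choice share in a parameter: under the
assumptions of the monotonicity lemma, if in addition `q · i j` is concave and
the `p · i k` and `q · i l` (`l ≠ j`) are convex (all twice differentiable),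
then `u ↦ π_j^w(u)` is concave on `T` and, for `l ≠ j`, `u ↦ π_l^w(u)` is
convex on `T`. -/
theorem choice_share_concave_in_parameter {n m : ℕ}
    (P : ℝ → Matrix (Fin n) (Fin n) ℝ) (q : ℝ → Fin n → Fin m → ℝ)
    (j : Fin m) (w : Fin n → ℝ) (hw : ∀ i, 0 ≤ w i)
    (T : Set ℝ) (hT : Convex ℝ T)
    (hPnonneg : ∀ u ∈ T, ∀ i k, 0 ≤ P u i k)
    (hqnonneg : ∀ u ∈ T, ∀ i l, 0 ≤ q u i l)
    (hrow : ∀ u ∈ T, ∀ i, (∑ k, P u i k) + (∑ l, q u i l) = 1)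
    (hspec : ∀ u ∈ T, ∀ μ ∈ spectrum ℂ ((P u).map (algebraMap ℝ ℂ)), ‖μ‖ < 1)
    (hqj_diff : ∀ i, ContDiffOn ℝ 2 (fun u => q u i j) T)
    (hqj_mono : ∀ i, MonotoneOn (fun u => q u i j) T)
    (hqj_ccv : ∀ i, ConcaveOn ℝ T (fun u => q u i j))
    (hp_diff : ∀ i k, ContDiffOn ℝ 2 (fun u => P u i k) T)
    (hp_anti : ∀ i k, AntitoneOn (fun u => P u i k) T)
    (hp_cvx : ∀ i k, ConvexOn ℝ T (fun u => P u i k))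
    (hql_diff : ∀ i, ∀ l ≠ j, ContDiffOn ℝ 2 (fun u => q u i l) T)
    (hql_anti : ∀ i, ∀ l ≠ j, AntitoneOn (fun u => q u i l) T)
    (hql_cvx : ∀ i, ∀ l ≠ j, ConvexOn ℝ T (fun u => q u i l)) :
    ConcaveOn ℝ T (fun u => w ⬝ᵥ ((1 - P u)⁻¹ *ᵥ fun i => q u i j)) ∧
      ∀ l ≠ j, ConvexOn ℝ T (fun u => w ⬝ᵥ ((1 - P u)⁻¹ *ᵥ fun i => q u i l)) := by
  have hql_NAC : ∀ i, ∀ l ≠ j, NAC T (fun u => q u i l) := fun i l hl =>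
    ⟨fun u hu => hqnonneg u hu i l, hql_anti i l hl, hql_cvx i l hl⟩
  have hp_NAC : ∀ i k, NAC T (fun u => P u i k) := fun i k =>
    ⟨fun u hu => hPnonneg u hu i k, hp_anti i k, hp_cvx i k⟩
  have hpow := NAC_pow_entry hT P hp_NAC
  have hconvex : ∀ l, l ≠ j →
      ConvexOn ℝ T (fun u => w ⬝ᵥ ((1 - P u)⁻¹ *ᵥ fun i => q u i l)) := by
    intro l hl
    refine convexOn_of_tendsto hT
      (F := fun N u => w ⬝ᵥ ((∑ k ∈ Finset.range N, P u ^ k) *ᵥ fun i => q u i l)) ?_ ?_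
    · intro N
      have hexp : (fun u => w ⬝ᵥ ((∑ k ∈ Finset.range N, P u ^ k) *ᵥ fun i => q u i l))
          = fun u => ∑ i, ∑ i', w i * ((∑ k ∈ Finset.range N, (P u ^ k) i i') * q u i' l) := by
        funext u
        simp [dotProduct, Matrix.mulVec, Matrix.sum_apply, Finset.mul_sum, mul_assoc]
      show ConvexOn ℝ T (fun u => w ⬝ᵥ ((∑ k ∈ Finset.range N, P u ^ k) *ᵥ fun i => q u i l))
      rw [hexp]
      refine convexOn_sum' hT _ _ fun i _ => ?_
      refine convexOn_sum' hT _ _ fun i' _ => ?_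
      have h1 : NAC T (fun u => (∑ k ∈ Finset.range N, (P u ^ k) i i') * q u i' l) :=
        (NAC_sum hT _ _ fun k _ => hpow k i i').mul (hql_NAC i' l hl)
      have h2 := h1.2.2.smul (hw i)
      simpa [smul_eq_mul] using h2
    · intro u hu
      exact (neumann_real (P u) (hspec u hu)).2 w (fun i => q u i l)
  have hkey : ∀ u ∈ T, w ⬝ᵥ ((1 - P u)⁻¹ *ᵥ fun i => q u i j)
      = (∑ i, w i) - ∑ l ∈ Finset.univ.erase j,
          w ⬝ᵥ ((1 - P u)⁻¹ *ᵥ fun i => q u i l) := by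
    intro u hu
    have hdet := (neumann_real (P u) (hspec u hu)).1
    have h1 : (1 - P u) *ᵥ (fun _ => (1 : ℝ)) = fun i => ∑ l, q u i l := by
      funext i
      have hr := hrow u hu i
      simp only [Matrix.mulVec, dotProduct, Matrix.sub_apply, Matrix.one_apply, mul_one,
        Finset.sum_sub_distrib, Finset.sum_ite_eq, Finset.mem_univ, if_true]
      linarith
    have h2 : ((1 - P u)⁻¹ *ᵥ fun i => ∑ l, q u i l)
        = fun i => ∑ l, ((1 - P u)⁻¹ *ᵥ fun i' => q u i' l) i := by
      funext i
      simp only [Matrix.mulVec, dotProduct, Finset.mul_sum]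
      rw [Finset.sum_comm]
    have h3 : (w ⬝ᵥ fun i => ∑ l, ((1 - P u)⁻¹ *ᵥ fun i' => q u i' l) i)
        = ∑ l, w ⬝ᵥ ((1 - P u)⁻¹ *ᵥ fun i' => q u i' l) := by
      simp only [dotProduct, Finset.mul_sum]
      rw [Finset.sum_comm]
    have htot : ∑ l, w ⬝ᵥ ((1 - P u)⁻¹ *ᵥ fun i' => q u i' l) = ∑ i, w i := by
      rw [← h3, ← h2, ← h1, Matrix.mulVec_mulVec, Matrix.nonsing_inv_mul _ hdet,
        Matrix.one_mulVec]
      simp [dotProduct]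
    have hsplit := Finset.add_sum_erase Finset.univ
      (fun l => w ⬝ᵥ ((1 - P u)⁻¹ *ᵥ fun i' => q u i' l)) (Finset.mem_univ j)
    rw [htot] at hsplit
    linarith
  constructor
  · have hS : ConvexOn ℝ T (fun u => ∑ l ∈ Finset.univ.erase j,
        w ⬝ᵥ ((1 - P u)⁻¹ *ᵥ fun i => q u i l)) :=
      convexOn_sum' hT _ _ fun l hl => hconvex l (Finset.ne_of_mem_erase hl)
    have h2 := (concaveOn_const (∑ i, w i) hT).add hS.neg
    refine concaveOn_congr hkey (concaveOn_congr (fun x _ => ?_) h2)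
    simp [sub_eq_add_neg]
  · exact fun l hl => hconvex l hl
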